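/- (Recursion for the dual partition function, eq. (1)) Fix a finite alphabet A with |A| = 4 and a weight function w assigning a positive real w(L,σ_L) to each loop L of a bistructure B and each assignment σ_L : L → A. For a substructure X and τ : E^X → A define Q(X,τ) = Σ_{σ : V^X → A, σ|_{E^X} = τ} Π_{P∈X} w(P, σ|_P). Let X be an irreducible substructure of B, L ∈ X, and X_1,…,X_k the irreducible components of X∖{L}, and let W = (L ∪ ⋃_{i=1}^k E^{X_i}) ∖ E^X. Then for every τ : E^X → A, Q(X,τ) = Σ_{σ' : W → A} w(L, σ_L) · Π_{i=1}^k Q(X_i, τ_{X_i}), where σ_L : L → A and τ_{X_i} : E^{X_i} → A denote the restrictions of the combined assignment given by τ on E^X and σ' on W. -/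

import Mathlib

/-- An arc `(i,j)` in a diagram. -/
abbrev Arc : Type := ℕ × ℕ

/-- Two arcs cross iff `p.1 < q.1 < p.2 < q.2` or `q.1 < p.1 < q.2 < p.2`. -/
def Arc.crosses (p q : Arc) : Prop :=
  (p.1 < q.1 ∧ q.1 < p.2 ∧ p.2 < q.2) ∨ (q.1 < p.1 ∧ p.1 < q.2 ∧ q.2 < p.2)

/-- Nesting order: `Arc.nested q p` means `q ≺ p`, i.e. `p.1 < q.1 < q.2 < p.2`. -/
def Arc.nested (q p : Arc) : Prop := p.1 < q.1 ∧ q.1 < q.2 ∧ q.2 < p.2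

/-- An RNA secondary structure on `{1,…,n}` with rainbow arc `(0, n+1)`. -/
structure SecStr (n : ℕ) : Type where
  arcs : Finset Arc
  lt_of_mem : ∀ p ∈ arcs, p.1 < p.2
  le_of_mem : ∀ p ∈ arcs, p.2 ≤ n + 1
  rainbow_mem : (0, n + 1) ∈ arcs
  matching : ∀ p ∈ arcs, ∀ q ∈ arcs, ∀ v : ℕ, 1 ≤ v → v ≤ n →
    (v = p.1 ∨ v = p.2) → (v = q.1 ∨ v = q.2) → p = q
  noncrossing : ∀ p ∈ arcs, ∀ q ∈ arcs, ¬ Arc.crosses p q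

namespace SecStr

variable {n : ℕ}

/-- The loop of an arc `p` of `R`. -/
def loop (R : SecStr n) (p : Arc) : Set ℕ :=
  {v | p.1 ≤ v ∧ v ≤ p.2 ∧ ¬ ∃ q ∈ R.arcs, Arc.nested q p ∧ q.1 < v ∧ v < q.2}

/-- A loop of `R` is the loop of one of its arcs. -/
def IsLoop (R : SecStr n) (L : Set ℕ) : Prop := ∃ p ∈ R.arcs, L = R.loop p

end SecStr
/-- A label for a loop of a bistructure: `true` tags `R`-loops, `false` tags `S`-loops,
together with the maximal arc of the loop. -/
abbrev LoopLabel : Type := Bool × Arc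

/-- A bistructure `B(R,S)`: two secondary structures on the same vertex set. -/
structure Bistructure (n : ℕ) : Type where
  R : SecStr n
  S : SecStr n

namespace Bistructure

variable {n : ℕ}

/-- The loop set of a bistructure: the disjoint union of the `R`-loops and `S`-loops,
encoded as tagged arcs. -/
def labels (B : Bistructure n) : Finset LoopLabel :=
  B.R.arcs.image (fun p => (true, p)) ∪ B.S.arcs.image (fun p => (false, p))

/-- The vertex set of the loop with label `x`. -/
def loopSet (B : Bistructure n) (x : LoopLabel) : Set ℕ :=
  if x.1 then B.R.loop x.2 else B.S.loop x.2

/-- Two loops intersect. -/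
def intersects (B : Bistructure n) (a b : LoopLabel) : Prop :=
  (B.loopSet a ∩ B.loopSet b).Nonempty

end Bistructure

open scoped Classical

namespace Bistructure

variable {n : ℕ}

/-- The vertex set `V^X` of a substructure `X` (a set of loops of `B`). -/
def Vset (B : Bistructure n) (X : Finset LoopLabel) : Set ℕ :=
  ⋃ L ∈ X, B.loopSet L

/-- The exposed vertex set `E^X = V^X ∩ V^{B∖X}` of a substructure `X`. -/
def exposed (B : Bistructure n) (X : Finset LoopLabel) : Set ℕ :=
  B.Vset X ∩ B.Vset (B.labels \ X)

/-- A substructure is reducible if it can be partitioned into two nonempty parts such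
that every loop of one part is disjoint from every loop of the other. -/
def Reducible (B : Bistructure n) (X : Finset LoopLabel) : Prop :=
  ∃ X1 X2 : Finset LoopLabel, X1 ∪ X2 = X ∧ Disjoint X1 X2 ∧
    X1.Nonempty ∧ X2.Nonempty ∧ ∀ a ∈ X1, ∀ b ∈ X2, ¬ B.intersects a b

/-- The connected component of `L` in the loop intersection graph of `X`. -/
noncomputable def comp (B : Bistructure n) (X : Finset LoopLabel) (L : LoopLabel) :
    Finset LoopLabel :=
  X.filter (fun P =>
    Relation.ReflTransGen (fun a b => a ∈ X ∧ b ∈ X ∧ B.intersects a b) L P)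

/-- The irreducible components of a substructure `X`: the connected components of its
loop intersection graph. -/
noncomputable def comps (B : Bistructure n) (X : Finset LoopLabel) :
    Finset (Finset LoopLabel) :=
  X.image (B.comp X)

end Bistructure

namespace Bistructure

variable {n : ℕ} {A : Type} [Fintype A]

/-- The dual partition function `Q(X,τ)` of a substructure `X` with boundary assignment
`τ` on the exposed vertices: the sum over all assignments `σ` of letters of `A` to the
vertices of `X` agreeing with `τ` on `E^X` (extended by the default letter `d` off
`V^X`) of the product of the loop weights. -/
noncomputable def Qpf (B : Bistructure n) (w : LoopLabel → (Fin (n + 2) → A) → ℝ)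
    (d : A) (X : Finset LoopLabel) (τ : Fin (n + 2) → A) : ℝ :=
  ∑ σ ∈ Finset.univ.filter (fun σ : Fin (n + 2) → A =>
      (∀ v : Fin (n + 2), (v : ℕ) ∈ B.exposed X → σ v = τ v) ∧
      (∀ v : Fin (n + 2), (v : ℕ) ∉ B.Vset X → σ v = d)),
    ∏ P ∈ X, w P σ

/-- The set `W = (L ∪ ⋃ᵢ E^{Xᵢ}) ∖ E^X` of vertices newly assigned at the removal of
the loop `L` from the substructure `X`. -/
noncomputable def Wset (B : Bistructure n) (X : Finset LoopLabel) (L : LoopLabel) :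
    Set ℕ :=
  (B.loopSet L ∪ ⋃ C ∈ B.comps (X.erase L), B.exposed C) \ B.exposed X

/-- The combined assignment: `σ'` on `W` and `τ` elsewhere. -/
noncomputable def combine (W : Set ℕ) (σ' τ : Fin (n + 2) → A) : Fin (n + 2) → A :=
  fun v => if (v : ℕ) ∈ W then σ' v else τ v

end Bistructure

section Stmt15Aux

variable {n : ℕ}

private lemma aux_comp_eq {B : Bistructure n} {X : Finset LoopLabel} {P Q : LoopLabel}
    (h : Q ∈ B.comp X P) : B.comp X Q = B.comp X P := by
  have hsym : Symmetric (fun a b : LoopLabel => a ∈ X ∧ b ∈ X ∧ B.intersects a b) := by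
    rintro a b ⟨h1, h2, h3⟩
    obtain ⟨v, hv1, hv2⟩ := h3
    exact ⟨h2, h1, ⟨v, Set.mem_inter hv2 hv1⟩⟩
  simp only [Bistructure.comp, Finset.mem_filter] at h
  ext R
  simp only [Bistructure.comp, Finset.mem_filter]
  constructor
  · rintro ⟨hR, hr⟩
    exact ⟨hR, h.2.trans hr⟩
  · rintro ⟨hR, hr⟩
    exact ⟨hR, Relation.ReflTransGen.trans ((@Relation.ReflTransGen.symmetric _ _ ⟨fun _ _ hab => hsym hab⟩).symm _ _ h.2) hr⟩

private lemma aux_comp_self {B : Bistructure n} {X : Finset LoopLabel} {P : LoopLabel}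
    (hP : P ∈ X) : P ∈ B.comp X P := by
  simp only [Bistructure.comp, Finset.mem_filter]
  exact ⟨hP, Relation.ReflTransGen.refl⟩

private lemma aux_comp_subset {B : Bistructure n} {X : Finset LoopLabel} {P : LoopLabel} :
    B.comp X P ⊆ X := Finset.filter_subset _ _

private lemma aux_comps_eq {B : Bistructure n} {X : Finset LoopLabel} {C : Finset LoopLabel}
    (hC : C ∈ B.comps X) {a : LoopLabel} (ha : a ∈ C) : C = B.comp X a := by
  obtain ⟨P, hP, rfl⟩ := Finset.mem_image.mp hC
  exact (aux_comp_eq ha).symm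

private lemma aux_Vdisj {B : Bistructure n} {X : Finset LoopLabel}
    {C C' : Finset LoopLabel} (hC : C ∈ B.comps X) (hC' : C' ∈ B.comps X)
    (hne : C ≠ C') {v : ℕ} (hv : v ∈ B.Vset C) (hv' : v ∈ B.Vset C') : False := by
  simp only [Bistructure.Vset, Set.mem_iUnion, exists_prop] at hv hv'
  obtain ⟨a, ha, hva⟩ := hv
  obtain ⟨b, hb, hvb⟩ := hv'
  have haX : a ∈ X := aux_comp_subset ((aux_comps_eq hC ha) ▸ ha)
  have hbX : b ∈ X := aux_comp_subset ((aux_comps_eq hC' hb) ▸ hb)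
  have hab : b ∈ B.comp X a := by
    simp only [Bistructure.comp, Finset.mem_filter]
    exact ⟨hbX, Relation.ReflTransGen.single ⟨haX, hbX, ⟨v, Set.mem_inter hva hvb⟩⟩⟩
  exact hne ((aux_comps_eq hC ha).trans
    ((aux_comp_eq hab).symm.trans (aux_comps_eq hC' hb).symm))

private lemma aux_biUnion {B : Bistructure n} (X : Finset LoopLabel) :
    (B.comps X).biUnion id = X := by
  ext P
  simp only [Finset.mem_biUnion, id]
  constructor
  · rintro ⟨C, hC, hP⟩
    obtain ⟨Q, hQ, rfl⟩ := Finset.mem_image.mp hC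
    exact aux_comp_subset hP
  · intro hP
    exact ⟨B.comp X P, Finset.mem_image_of_mem _ hP, aux_comp_self hP⟩

private lemma aux_pairwise {B : Bistructure n} (X : Finset LoopLabel) :
    (↑(B.comps X) : Set (Finset LoopLabel)).PairwiseDisjoint id := by
  intro C hC C' hC' hne
  rw [Finset.mem_coe] at hC hC'
  refine Finset.disjoint_left.mpr ?_
  intro a haC haC'
  exact hne ((aux_comps_eq hC haC).trans (aux_comps_eq hC' haC').symm)

end Stmt15Aux
section Stmt15Aux2

variable {n : ℕ} {A : Type} [Fintype A]

private noncomputable def auxT (B : Bistructure n) (d : A) (Y : Finset LoopLabel)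
    (β : Fin (n + 2) → A) : Finset (Fin (n + 2) → A) :=
  Finset.univ.filter (fun σ : Fin (n + 2) → A =>
    (∀ v : Fin (n + 2), (v : ℕ) ∈ B.exposed Y → σ v = β v) ∧
    (∀ v : Fin (n + 2), (v : ℕ) ∉ B.Vset Y → σ v = d))

private lemma auxQ (B : Bistructure n) (w : LoopLabel → (Fin (n + 2) → A) → ℝ) (d : A)
    (Y : Finset LoopLabel) (β : Fin (n + 2) → A) :
    B.Qpf w d Y β = ∑ σ ∈ auxT B d Y β, ∏ P ∈ Y, w P σ := rfl

private lemma mem_auxT {B : Bistructure n} {d : A} {Y : Finset LoopLabel}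
    {β σ : Fin (n + 2) → A} :
    σ ∈ auxT B d Y β ↔
      (∀ v : Fin (n + 2), (v : ℕ) ∈ B.exposed Y → σ v = β v) ∧
      (∀ v : Fin (n + 2), (v : ℕ) ∉ B.Vset Y → σ v = d) := by
  simp [auxT]

private noncomputable def auxPhiW (B : Bistructure n) (X : Finset LoopLabel) (L : LoopLabel)
    (d : A) (σ : Fin (n + 2) → A) : Fin (n + 2) → A :=
  fun v => if (v : ℕ) ∈ B.Wset X L then σ v else d

private noncomputable def auxPhiC (B : Bistructure n) (C : Finset LoopLabel)
    (d : A) (σ : Fin (n + 2) → A) : Fin (n + 2) → A :=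
  fun v => if (v : ℕ) ∈ B.Vset C then σ v else d

private noncomputable def auxPsi (B : Bistructure n) (X : Finset LoopLabel) (L : LoopLabel)
    (τ : Fin (n + 2) → A) (d : A) (σ' : Fin (n + 2) → A)
    (g : {C // C ∈ B.comps (X.erase L)} → Fin (n + 2) → A) : Fin (n + 2) → A :=
  fun v =>
    if (v : ℕ) ∈ B.Wset X L then σ' v
    else if (v : ℕ) ∈ B.exposed X then τ v
    else if h : ∃ C : {C // C ∈ B.comps (X.erase L)}, (v : ℕ) ∈ B.Vset C.1 then g h.choose v
    else d

end Stmt15Aux2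
/-- recursion for the dual partition function, eq. (1): for a finite
alphabet `A` with `|A| = 4`, positive loop weights `w` depending only on the letters on
the loop, an irreducible substructure `X` of `B`, a loop `L ∈ X` with irreducible
components `X₁,…,X_k` of `X ∖ {L}`, `W = (L ∪ ⋃ᵢ E^{Xᵢ}) ∖ E^X`, and any boundary
assignment `τ` on `E^X`:
`Q(X,τ) = Σ_{σ' : W → A} w(L,σ_L) · Πᵢ Q(Xᵢ,τ_{Xᵢ})`, where `σ_L` and `τ_{Xᵢ}` are the
restrictions of the assignment combining `τ` on `E^X` with `σ'` on `W`. -/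
theorem stmt15 (n : ℕ) (A : Type) [Fintype A] (hA : Fintype.card A = 4) (d : A)
    (B : Bistructure n) (w : LoopLabel → (Fin (n + 2) → A) → ℝ)
    (hwpos : ∀ L σ, 0 < w L σ)
    (hwloc : ∀ (L : LoopLabel) (σ σ' : Fin (n + 2) → A),
        (∀ v : Fin (n + 2), (v : ℕ) ∈ B.loopSet L → σ v = σ' v) → w L σ = w L σ')
    (X : Finset LoopLabel) (hX : X ⊆ B.labels) (hXne : X.Nonempty)
    (hirr : ¬ B.Reducible X) (L : LoopLabel) (hL : L ∈ X) (τ : Fin (n + 2) → A) :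
    B.Qpf w d X τ =
      ∑ σ' ∈ Finset.univ.filter (fun σ' : Fin (n + 2) → A =>
          ∀ v : Fin (n + 2), (v : ℕ) ∉ B.Wset X L → σ' v = d),
        w L (Bistructure.combine (B.Wset X L) σ' τ) *
          ∏ C ∈ B.comps (X.erase L),
            B.Qpf w d C (Bistructure.combine (B.Wset X L) σ' τ) := by
  classical
  -- basic set facts
  have hLlab : L ∈ B.labels := hX hL
  have hCsub : ∀ C ∈ B.comps (X.erase L), C ⊆ X.erase L := by
    intro C hC
    obtain ⟨P, hP, rfl⟩ := Finset.mem_image.mp hC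
    exact aux_comp_subset
  have hCX : ∀ C ∈ B.comps (X.erase L), C ⊆ X :=
    fun C hC => (hCsub C hC).trans (Finset.erase_subset _ _)
  have hVmem : ∀ (Y : Finset LoopLabel) (v : ℕ),
      v ∈ B.Vset Y ↔ ∃ P ∈ Y, v ∈ B.loopSet P := by
    intro Y v; simp [Bistructure.Vset]
  have hloopV : ∀ (Y : Finset LoopLabel) (P : LoopLabel), P ∈ Y → ∀ v : ℕ,
      v ∈ B.loopSet P → v ∈ B.Vset Y := by
    intro Y P hP v hv; exact (hVmem Y v).mpr ⟨P, hP, hv⟩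
  have hVmono : ∀ (Y Z : Finset LoopLabel), Y ⊆ Z → ∀ v : ℕ,
      v ∈ B.Vset Y → v ∈ B.Vset Z := by
    intro Y Z hYZ v hv
    obtain ⟨P, hP, hvP⟩ := (hVmem Y v).mp hv
    exact (hVmem Z v).mpr ⟨P, hYZ hP, hvP⟩
  have hexpmem : ∀ (Y : Finset LoopLabel) (v : ℕ),
      v ∈ B.exposed Y ↔ v ∈ B.Vset Y ∧ v ∈ B.Vset (B.labels \ Y) := by
    intro Y v; simp [Bistructure.exposed]
  have hWmem : ∀ v : ℕ, v ∈ B.Wset X L ↔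
      ((v ∈ B.loopSet L ∨ ∃ C ∈ B.comps (X.erase L), v ∈ B.exposed C) ∧
        v ∉ B.exposed X) := by
    intro v
    simp [Bistructure.Wset]
  have hW_EX : ∀ v : ℕ, v ∈ B.Wset X L → v ∉ B.exposed X :=
    fun v hv => ((hWmem v).mp hv).2
  have hW_VX : ∀ v : ℕ, v ∈ B.Wset X L → v ∈ B.Vset X := by
    intro v hv
    rcases ((hWmem v).mp hv).1 with h | ⟨C, hC, h⟩
    · exact hloopV X L hL v h
    · exact hVmono C X (hCX C hC) v ((hexpmem C v).mp h).1
  have hEX_VX : ∀ v : ℕ, v ∈ B.exposed X → v ∈ B.Vset X :=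
    fun v hv => ((hexpmem X v).mp hv).1
  have hL_WE : ∀ v : ℕ, v ∈ B.loopSet L → v ∈ B.Wset X L ∨ v ∈ B.exposed X := by
    intro v hv
    by_cases hE : v ∈ B.exposed X
    · exact Or.inr hE
    · exact Or.inl ((hWmem v).mpr ⟨Or.inl hv, hE⟩)
  have hEC_WE : ∀ C ∈ B.comps (X.erase L), ∀ v : ℕ, v ∈ B.exposed C →
      v ∈ B.Wset X L ∨ v ∈ B.exposed X := by
    intro C hC v hv
    by_cases hE : v ∈ B.exposed X
    · exact Or.inr hE
    · exact Or.inl ((hWmem v).mpr ⟨Or.inr ⟨C, hC, hv⟩, hE⟩)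
  have hWC : ∀ C ∈ B.comps (X.erase L), ∀ v : ℕ, v ∈ B.Wset X L → v ∈ B.Vset C →
      v ∈ B.exposed C := by
    intro C hC v hvW hvC
    rcases ((hWmem v).mp hvW).1 with h | ⟨C', hC', h⟩
    · refine (hexpmem C v).mpr ⟨hvC, ?_⟩
      have hLC : L ∈ B.labels \ C := by
        refine Finset.mem_sdiff.mpr ⟨hLlab, fun hLC => ?_⟩
        exact Finset.notMem_erase L X (hCsub C hC hLC)
      exact hloopV _ L hLC v h
    · by_cases hCC : C' = C
      · exact hCC ▸ h
      · exact (aux_Vdisj hC' hC hCC ((hexpmem C' v).mp h).1 hvC).elim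
  have hEXC : ∀ C ∈ B.comps (X.erase L), ∀ v : ℕ, v ∈ B.exposed X → v ∈ B.Vset C →
      v ∈ B.exposed C := by
    intro C hC v hvE hvC
    refine (hexpmem C v).mpr ⟨hvC, hVmono _ _ ?_ v ((hexpmem X v).mp hvE).2⟩
    intro P hP
    rw [Finset.mem_sdiff] at hP ⊢
    exact ⟨hP.1, fun h => hP.2 (hCX C hC h)⟩
  have hVXdec : ∀ v : ℕ, v ∈ B.Vset X →
      v ∈ B.loopSet L ∨ ∃ C ∈ B.comps (X.erase L), v ∈ B.Vset C := by
    intro v hv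
    obtain ⟨P, hP, hvP⟩ := (hVmem X v).mp hv
    by_cases hPL : P = L
    · exact Or.inl (hPL ▸ hvP)
    · have hP' : P ∈ X.erase L := Finset.mem_erase.mpr ⟨hPL, hP⟩
      refine Or.inr ⟨B.comp (X.erase L) P, ?_, hloopV _ P (aux_comp_self hP') v hvP⟩
      exact Finset.mem_image_of_mem _ hP'
  -- product decomposition
  have hprodX : ∀ σ : Fin (n + 2) → A, ∏ P ∈ X, w P σ =
      w L σ * ∏ C ∈ B.comps (X.erase L), ∏ P ∈ C, w P σ := by
    intro σ
    have h1 := (Finset.mul_prod_erase X (fun P => w P σ) hL).symm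
    have h2 : ∏ P ∈ (B.comps (X.erase L)).biUnion id, w P σ
        = ∏ C ∈ B.comps (X.erase L), ∏ P ∈ C, w P σ := by
      rw [Finset.prod_biUnion (aux_pairwise _)]
      rfl
    rw [aux_biUnion] at h2
    rw [h1, h2]
  have hattach : ∀ f : Finset LoopLabel → ℝ, ∏ C ∈ B.comps (X.erase L), f C
      = ∏ C : {C // C ∈ B.comps (X.erase L)}, f C.1 := by
    intro f
    rw [Finset.univ_eq_attach, Finset.prod_attach]
  have hcomb : ∀ (σ' : Fin (n + 2) → A) (v : Fin (n + 2)),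
      Bistructure.combine (B.Wset X L) σ' τ v
        = if (v : ℕ) ∈ B.Wset X L then σ' v else τ v := fun _ _ => rfl
  -- key pointwise lemmas about auxPsi
  have hpsiWE : ∀ (σ' : Fin (n + 2) → A)
      (g : {C // C ∈ B.comps (X.erase L)} → Fin (n + 2) → A) (v : Fin (n + 2)),
      ((v : ℕ) ∈ B.Wset X L ∨ (v : ℕ) ∈ B.exposed X) →
      auxPsi B X L τ d σ' g v = Bistructure.combine (B.Wset X L) σ' τ v := by
    intro σ' g v hv
    simp only [auxPsi]
    rw [hcomb]
    by_cases hvW : (v : ℕ) ∈ B.Wset X L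
    · rw [if_pos hvW, if_pos hvW]
    · rcases hv with h | h
      · exact absurd h hvW
      · rw [if_neg hvW, if_pos h, if_neg hvW]
  have hpsiC : ∀ (σ' : Fin (n + 2) → A)
      (g : {C // C ∈ B.comps (X.erase L)} → Fin (n + 2) → A),
      (∀ v : Fin (n + 2), (v : ℕ) ∉ B.Wset X L → σ' v = d) →
      (∀ C : {C // C ∈ B.comps (X.erase L)},
        g C ∈ auxT B d C.1 (Bistructure.combine (B.Wset X L) σ' τ)) →
      ∀ (C : {C // C ∈ B.comps (X.erase L)}) (v : Fin (n + 2)),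
        (v : ℕ) ∈ B.Vset C.1 → auxPsi B X L τ d σ' g v = g C v := by
    intro σ' g hσ' hg C v hvC
    obtain ⟨hg1, hg2⟩ := mem_auxT.mp (hg C)
    simp only [auxPsi]
    by_cases hvW : (v : ℕ) ∈ B.Wset X L
    · rw [if_pos hvW, hg1 v (hWC C.1 C.2 v hvW hvC), hcomb, if_pos hvW]
    · rw [if_neg hvW]
      by_cases hvE : (v : ℕ) ∈ B.exposed X
      · rw [if_pos hvE, hg1 v (hEXC C.1 C.2 v hvE hvC), hcomb, if_neg hvW]
      · rw [if_neg hvE]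
        have hex : ∃ C' : {C // C ∈ B.comps (X.erase L)}, (v : ℕ) ∈ B.Vset C'.1 :=
          ⟨C, hvC⟩
        rw [dif_pos hex]
        have hch : hex.choose = C := by
          by_contra hne
          exact aux_Vdisj hex.choose.2 C.2 (fun h => hne (Subtype.ext h))
            hex.choose_spec hvC
        rw [hch]
  -- rewrite both sides
  rw [auxQ]
  have hRHSstep : ∀ σ' : Fin (n + 2) → A,
      w L (Bistructure.combine (B.Wset X L) σ' τ) *
        ∏ C ∈ B.comps (X.erase L), B.Qpf w d C (Bistructure.combine (B.Wset X L) σ' τ)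
      = ∑ g ∈ Fintype.piFinset (fun C : {C // C ∈ B.comps (X.erase L)} =>
            auxT B d C.1 (Bistructure.combine (B.Wset X L) σ' τ)),
          w L (Bistructure.combine (B.Wset X L) σ' τ) *
            ∏ C : {C // C ∈ B.comps (X.erase L)}, ∏ P ∈ C.1, w P (g C) := by
    intro σ'
    rw [hattach (fun C => B.Qpf w d C (Bistructure.combine (B.Wset X L) σ' τ))]
    simp only [auxQ]
    rw [Finset.prod_univ_sum, Finset.mul_sum]
  have hgoalRHS : (∑ σ' ∈ Finset.univ.filter (fun σ' : Fin (n + 2) → A =>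
          ∀ v : Fin (n + 2), (v : ℕ) ∉ B.Wset X L → σ' v = d),
        w L (Bistructure.combine (B.Wset X L) σ' τ) *
          ∏ C ∈ B.comps (X.erase L),
            B.Qpf w d C (Bistructure.combine (B.Wset X L) σ' τ))
      = ∑ x ∈ (Finset.univ.filter (fun σ' : Fin (n + 2) → A =>
            ∀ v : Fin (n + 2), (v : ℕ) ∉ B.Wset X L → σ' v = d)).sigma
            (fun σ' => Fintype.piFinset (fun C : {C // C ∈ B.comps (X.erase L)} =>
              auxT B d C.1 (Bistructure.combine (B.Wset X L) σ' τ))),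
          w L (Bistructure.combine (B.Wset X L) x.1 τ) *
            ∏ C : {C // C ∈ B.comps (X.erase L)}, ∏ P ∈ C.1, w P (x.2 C) := by
    rw [Finset.sum_sigma]
    exact Finset.sum_congr rfl fun σ' _ => hRHSstep σ'
  rw [hgoalRHS]
  refine Finset.sum_bij'
    (fun σ _ => (⟨auxPhiW B X L d σ, fun C => auxPhiC B C.1 d σ⟩ :
      (_ : Fin (n + 2) → A) × ({C // C ∈ B.comps (X.erase L)} → Fin (n + 2) → A)))
    (fun x _ => auxPsi B X L τ d x.1 x.2) ?_ ?_ ?_ ?_ ?_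
  · -- hi
    intro σ hσ
    obtain ⟨hσ1, hσ2⟩ := mem_auxT.mp hσ
    rw [Finset.mem_sigma]
    constructor
    · simp only [Finset.mem_filter, Finset.mem_univ, true_and]
      intro v hv
      simp only [auxPhiW]
      exact if_neg hv
    · rw [Fintype.mem_piFinset]
      intro C
      rw [mem_auxT]
      constructor
      · intro v hvE
        have hvC : (v : ℕ) ∈ B.Vset C.1 := ((hexpmem C.1 (v : ℕ)).mp hvE).1
        simp only [auxPhiC]
        rw [if_pos hvC, hcomb]
        by_cases hvW : (v : ℕ) ∈ B.Wset X L
        · rw [if_pos hvW]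
          simp only [auxPhiW]
          rw [if_pos hvW]
        · rw [if_neg hvW]
          rcases hEC_WE C.1 C.2 v hvE with h | h
          · exact absurd h hvW
          · exact hσ1 v h
      · intro v hvC
        simp only [auxPhiC]
        exact if_neg hvC
  · -- hj
    intro x hx
    rw [Finset.mem_sigma] at hx
    obtain ⟨hx1, hx2⟩ := hx
    simp only [Finset.mem_filter, Finset.mem_univ, true_and] at hx1
    rw [mem_auxT]
    constructor
    · intro v hvE
      simp only [auxPsi]
      rw [if_neg (fun h => hW_EX v h hvE), if_pos hvE]
    · intro v hvV
      have hne : ¬∃ C : {C // C ∈ B.comps (X.erase L)}, (v : ℕ) ∈ B.Vset C.1 := by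
        rintro ⟨C, hvC⟩
        exact hvV (hVmono C.1 X (hCX C.1 C.2) v hvC)
      simp only [auxPsi]
      rw [if_neg (fun h => hvV (hW_VX v h)), if_neg (fun h => hvV (hEX_VX v h)),
        dif_neg hne]
  · -- left inverse
    intro σ hσ
    obtain ⟨hσ1, hσ2⟩ := mem_auxT.mp hσ
    show auxPsi B X L τ d (auxPhiW B X L d σ) (fun C => auxPhiC B C.1 d σ) = σ
    funext v
    by_cases hvW : (v : ℕ) ∈ B.Wset X L
    · rw [hpsiWE _ _ v (Or.inl hvW), hcomb, if_pos hvW]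
      simp only [auxPhiW]
      rw [if_pos hvW]
    · by_cases hvE : (v : ℕ) ∈ B.exposed X
      · rw [hpsiWE _ _ v (Or.inr hvE), hcomb, if_neg hvW]
        exact (hσ1 v hvE).symm
      · simp only [auxPsi]
        rw [if_neg hvW, if_neg hvE]
        by_cases hex : ∃ C : {C // C ∈ B.comps (X.erase L)}, (v : ℕ) ∈ B.Vset C.1
        · rw [dif_pos hex]
          simp only [auxPhiC]
          rw [if_pos hex.choose_spec]
        · rw [dif_neg hex]
          refine (hσ2 v ?_).symm
          intro hvV
          rcases hVXdec v hvV with h | ⟨C, hC, h⟩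
          · rcases hL_WE v h with h' | h'
            · exact hvW h'
            · exact hvE h'
          · exact hex ⟨⟨C, hC⟩, h⟩
  · -- right inverse
    intro x hx
    rw [Finset.mem_sigma] at hx
    obtain ⟨hx1, hx2⟩ := hx
    simp only [Finset.mem_filter, Finset.mem_univ, true_and] at hx1
    rw [Fintype.mem_piFinset] at hx2
    obtain ⟨σ', g⟩ := x
    simp only at hx1 hx2
    show (⟨auxPhiW B X L d (auxPsi B X L τ d σ' g),
        fun C => auxPhiC B C.1 d (auxPsi B X L τ d σ' g)⟩ :
      (_ : Fin (n + 2) → A) × ({C // C ∈ B.comps (X.erase L)} → Fin (n + 2) → A))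
      = ⟨σ', g⟩
    have ha : auxPhiW B X L d (auxPsi B X L τ d σ' g) = σ' := by
      funext v
      simp only [auxPhiW]
      by_cases hvW : (v : ℕ) ∈ B.Wset X L
      · rw [if_pos hvW]
        simp only [auxPsi]
        rw [if_pos hvW]
      · rw [if_neg hvW]
        exact (hx1 v hvW).symm
    have hb : (fun C => auxPhiC B C.1 d (auxPsi B X L τ d σ' g)) = g := by
      funext C v
      simp only [auxPhiC]
      by_cases hvC : (v : ℕ) ∈ B.Vset C.1
      · rw [if_pos hvC]
        exact hpsiC σ' g hx1 hx2 C v hvC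
      · rw [if_neg hvC]
        exact ((mem_auxT.mp (hx2 C)).2 v hvC).symm
    exact Sigma.ext ha (heq_of_eq hb)
  · -- terms agree
    intro σ hσ
    obtain ⟨hσ1, hσ2⟩ := mem_auxT.mp hσ
    show ∏ P ∈ X, w P σ =
      w L (Bistructure.combine (B.Wset X L) (auxPhiW B X L d σ) τ) *
        ∏ C : {C // C ∈ B.comps (X.erase L)}, ∏ P ∈ C.1, w P (auxPhiC B C.1 d σ)
    rw [hprodX σ, hattach (fun C => ∏ P ∈ C, w P σ)]
    congr 1
    · refine hwloc L σ _ ?_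
      intro v hv
      rw [hcomb]
      by_cases hvW : (v : ℕ) ∈ B.Wset X L
      · rw [if_pos hvW]
        simp only [auxPhiW]
        rw [if_pos hvW]
      · rw [if_neg hvW]
        rcases hL_WE v hv with h | h
        · exact absurd h hvW
        · exact hσ1 v h
    · refine Finset.prod_congr rfl ?_
      intro C _
      refine Finset.prod_congr rfl ?_
      intro P hP
      refine hwloc P σ _ ?_
      intro v hv
      simp only [auxPhiC]
      rw [if_pos (hloopV C.1 P hP v hv)]
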